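/- arXiv:0805.4001 — 2 statements merged into one kernel-verified Lean document; each statement's English description precedes it below -/
import Mathlib

section
/- Let R be a discrete valuation ring with uniformizer x, and A = R[z]/(z^n). A finitely generated A-module M has no nonzero element annihilated by a power of x if and only if the R-module M^{(1)} = {u ∈ M : zu = 0} is free. Moreover, in that case every quotient M^{(i)}/M^{(i-1)} is a free R-module. -/
open Polynomial

/-- The local model `A = R[z]/(z^n)` of a primitive multiple curve of multiplicity `n`. -/
abbrev Az (R : Type) [CommRing R] (n : ℕ) : Type :=
  R[X] ⧸ Ideal.span ({X ^ n} : Set R[X])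

/-- The class of `z` (i.e. of `X`) in `A = R[z]/(z^n)`. -/
noncomputable def zc (R : Type) [CommRing R] (n : ℕ) : Az R n :=
  Ideal.Quotient.mk _ X

/-- The submodule `z^i M` of `M` (first canonical filtration). -/
noncomputable def zpowSub (R : Type) [CommRing R] (n : ℕ) (M : Type) [AddCommGroup M]
    [Module (Az R n) M] (i : ℕ) : Submodule (Az R n) M :=
  LinearMap.range ((zc R n ^ i) • (LinearMap.id : M →ₗ[Az R n] M))

/-- The submodule `M^{(i)} = {u ∈ M : z^i • u = 0}` (second canonical filtration). -/
noncomputable def ztor (R : Type) [CommRing R] (n : ℕ) (M : Type) [AddCommGroup M]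
    [Module (Az R n) M] (i : ℕ) : Submodule (Az R n) M :=
  LinearMap.ker ((zc R n ^ i) • (LinearMap.id : M →ₗ[Az R n] M))


theorem freeHelper (R : Type) [CommRing R] [IsDomain R] [IsPrincipalIdealRing R]
    (A : Type) [CommRing A] [Algebra R A] [Module.Finite R A]
    (M : Type) [AddCommGroup M] [Module A M] [Module.Finite A M]
    (h : ∀ (r : R) (u : M), r ≠ 0 → (algebraMap R A r) • u = 0 → u = 0) :
    Module.Free R (RestrictScalars R A M) := by
  letI : Module A (RestrictScalars R A M) := RestrictScalars.moduleOrig R A M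
  haveI : Module.Finite A (RestrictScalars R A M) := ‹Module.Finite A M›
  haveI : Module.Finite R (RestrictScalars R A M) :=
    Module.Finite.trans A (RestrictScalars R A M)
  haveI : NoZeroSMulDivisors R (RestrictScalars R A M) := by
    refine ⟨fun {r u} hru => ?_⟩
    rcases eq_or_ne r 0 with hr | hr
    · exact Or.inl hr
    · exact Or.inr (h r u hr (by rw [RestrictScalars.smul_def] at hru; exact hru))
  exact @Module.free_of_finite_type_torsion_free' R _ (RestrictScalars R A M) _
    (RestrictScalars.module R A M) _ _ ‹_›
    (@instIsTorsionFreeOfIsDomainOfNoZeroSMulDivisors R (RestrictScalars R A M) _ _ _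
      (RestrictScalars.module R A M) ‹_›)

theorem mem_ztor_iff (R : Type) [CommRing R] (n : ℕ) (M : Type) [AddCommGroup M]
    [Module (Az R n) M] (i : ℕ) (u : M) :
    u ∈ ztor R n M i ↔ (zc R n) ^ i • u = 0 := by
  rw [ztor, LinearMap.mem_ker, LinearMap.smul_apply, LinearMap.id_apply]

set_option maxHeartbeats 1000000

/-- Let `R` be a DVR with uniformizer `x` and `A = R[z]/(z^n)`. A finitely
generated `A`-module `M` has no nonzero element annihilated by a power of `x` iff the
`R`-module `M^{(1)} = {u : z u = 0}` is free; and in that case every quotient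
`M^{(i)}/M^{(i-1)}` is a free `R`-module. -/
theorem stmt8 (R : Type) [CommRing R] [IsDomain R] [IsDiscreteValuationRing R] (n : ℕ)
    (x : R) (hx : Irreducible x)
    (M : Type) [AddCommGroup M] [Module (Az R n) M] [Module.Finite (Az R n) M] :
    ((∀ (u : M) (p : ℕ), (algebraMap R (Az R n) x) ^ p • u = 0 → u = 0) ↔
      Module.Free R (RestrictScalars R (Az R n) ↥(ztor R n M 1))) ∧
    ((∀ (u : M) (p : ℕ), (algebraMap R (Az R n) x) ^ p • u = 0 → u = 0) →
      ∀ i : ℕ, 1 ≤ i → i ≤ n →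
        Module.Free R (RestrictScalars R (Az R n)
          (ztor R n M i ⧸ Submodule.comap (ztor R n M i).subtype (ztor R n M (i - 1))))) := by
  haveI : Module.Finite R (Az R n) :=
    Module.Finite.of_basis (AdjoinRoot.powerBasis' (monic_X_pow (R := R) (n := n))).basis
  haveI : IsNoetherian (Az R n) M := isNoetherian_of_isNoetherianRing_of_finite (Az R n) M
  haveI finztor : ∀ i : ℕ, Module.Finite (Az R n) ↥(ztor R n M i) := fun i =>
    Module.Finite.iff_fg.2 (IsNoetherian.noetherian _)
  -- `x`-power torsion-freeness upgrades to torsion-freeness for all nonzero `r : R`.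
  have hgen : (∀ (u : M) (p : ℕ), (algebraMap R (Az R n) x) ^ p • u = 0 → u = 0) →
      ∀ (r : R) (u : M), r ≠ 0 → algebraMap R (Az R n) r • u = 0 → u = 0 := by
    intro h r u hr hru
    obtain ⟨p, v, rfl⟩ := IsDiscreteValuationRing.eq_unit_mul_pow_irreducible hr hx
    apply h u p
    have h2 : algebraMap R (Az R n) (((v⁻¹ : Rˣ) : R)) •
        (algebraMap R (Az R n) ((v : R) * x ^ p) • u) = 0 := by rw [hru, smul_zero]
    rw [← mul_smul, ← map_mul, ← mul_assoc, Units.inv_mul, one_mul, map_pow] at h2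
    exact h2
  have hzn : (zc R n) ^ n = 0 := by
    rw [zc, ← map_pow]
    exact Ideal.Quotient.eq_zero_iff_mem.2 (Ideal.mem_span_singleton_self _)
  constructor
  · constructor
    · -- torsion-free → `M^{(1)}` free
      intro h
      exact freeHelper R (Az R n) _ (fun r u hr hru => by
        ext
        exact hgen h r u hr (by simpa using congrArg Subtype.val hru))
    · -- `M^{(1)}` free → torsion-free
      intro hfree u p hpu
      by_contra hu
      haveI := hfree
      -- let k be minimal with z^k • u = 0; k ≥ 1
      have hP : ∃ k, (zc R n) ^ k • u = 0 := ⟨n, by rw [hzn]; exact zero_smul (Az R n) u⟩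
      classical
      set k₀ := Nat.find hP with hk₀
      have hk₀spec : (zc R n) ^ k₀ • u = 0 := Nat.find_spec hP
      have hk₀pos : 1 ≤ k₀ := by
        rcases Nat.eq_zero_or_pos k₀ with h0 | h1
        · exfalso; apply hu; rw [h0, pow_zero, one_smul] at hk₀spec; exact hk₀spec
        · exact h1
      set v : M := (zc R n) ^ (k₀ - 1) • u with hv
      have hvne : v ≠ 0 := Nat.find_min hP (Nat.sub_lt hk₀pos one_pos)
      have hvmem : v ∈ ztor R n M 1 := by
        rw [mem_ztor_iff, pow_one, hv, ← mul_smul, ← pow_succ', Nat.sub_add_cancel hk₀pos]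
        exact hk₀spec
      -- x^p kills v, and M^{(1)} is free hence torsion-free over R
      have hxv : (algebraMap R (Az R n) x) ^ p • v = 0 := by
        rw [hv, smul_comm, hpu, smul_zero]
      have hxVN : (algebraMap R (Az R n) (x ^ p)) • (⟨v, hvmem⟩ : ↥(ztor R n M 1)) = 0 :=
        Subtype.ext (by rw [map_pow]; exact hxv)
      set e := RestrictScalars.addEquiv R (Az R n) ↥(ztor R n M 1) with he
      have hxV : (x ^ p : R) • e.symm ⟨v, hvmem⟩ = 0 := by
        rw [← RestrictScalars.addEquiv_symm_map_algebraMap_smul, hxVN, map_zero]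
      rcases smul_eq_zero.1 hxV with hxz | hVz
      · exact pow_ne_zero p hx.ne_zero hxz
      · have h0 : (⟨v, hvmem⟩ : ↥(ztor R n M 1)) = 0 := by
          have := congrArg e hVz
          rwa [AddEquiv.apply_symm_apply, map_zero] at this
        exact hvne (congrArg Subtype.val h0)
  · -- the quotients `M^{(i)}/M^{(i-1)}` are free
    intro h i hi _hn
    haveI : Module.Finite (Az R n)
        (↥(ztor R n M i) ⧸ Submodule.comap (ztor R n M i).subtype (ztor R n M (i - 1))) :=
      Module.Finite.of_surjective
        (Submodule.comap (ztor R n M i).subtype (ztor R n M (i - 1))).mkQ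
        (Submodule.mkQ_surjective _)
    refine freeHelper R (Az R n) _ ?_
    intro r q hr hrq
    obtain ⟨u, rfl⟩ := Submodule.Quotient.mk_surjective _ q
    rw [← Submodule.Quotient.mk_smul, Submodule.Quotient.mk_eq_zero] at hrq
    rw [Submodule.Quotient.mk_eq_zero]
    have hu1 : (algebraMap R (Az R n) r) • (u : M) ∈ ztor R n M (i - 1) := hrq
    rw [mem_ztor_iff] at hu1
    rw [smul_comm] at hu1
    have := hgen h r ((zc R n) ^ (i - 1) • (u : M)) hr hu1
    exact (mem_ztor_iff R n M (i - 1) (u : M)).2 this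
end

section
/- Let R be a discrete valuation ring with uniformizer x, A = R[z]/(z^n), and 0 → M' → M → M'' → 0 a short exact sequence of finitely generated A-modules each having no nonzero element annihilated by a power of x. Then the dual sequence 0 → Hom_A(M'', A) → Hom_A(M, A) → Hom_A(M', A) → 0 is exact. -/
open Polynomial

section prep
variable (R : Type) [CommRing R] (n : ℕ)
noncomputable def mkA : R[X] →ₐ[R] Az R n := Ideal.Quotient.mkₐ R _
lemma mkA_surjective : Function.Surjective (mkA R n) := Ideal.Quotient.mkₐ_surjective R _
lemma mkA_X : mkA R n X = zc R n := rfl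
lemma zc_pow_n : zc R n ^ n = 0 := by
  show Ideal.Quotient.mk _ X ^ n = 0
  rw [← map_pow, Ideal.Quotient.eq_zero_iff_mem]
  exact Ideal.subset_span rfl

lemma finiteA : Module.Finite R (Az R n) :=
  Module.Finite.of_basis (AdjoinRoot.powerBasis' (monic_X_pow n)).basis
end prep

section solve
variable {R : Type} [CommRing R] [IsDomain R] {n : ℕ}
variable {V : Type} [AddCommGroup V] [Module R V] [Module.Projective R V]

set_option maxRecDepth 4000 in
lemma solve_eq (ζ : V →ₗ[R] V) (hζ : ζ ^ n = 0) (η : V →ₗ[R] Az R n)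
    (hη : ∀ v : V, ∑ j ∈ Finset.range n, zc R n ^ j * η ((ζ ^ (n - 1 - j)) v) = 0) :
    ∃ θ : V →ₗ[R] Az R n, ∀ v : V, zc R n * θ v - θ (ζ v) = η v := by
  classical
  set π : R[X] →ₗ[R] Az R n := (mkA R n).toLinearMap with hπ
  have hπs : Function.Surjective π := mkA_surjective R n
  obtain ⟨ηt, hηt⟩ := Module.projective_lifting_property π η hπs
  have hηtv : ∀ v, π (ηt v) = η v := fun v => LinearMap.congr_fun hηt v
  set Dt : (V →ₗ[R] R[X]) → (V →ₗ[R] R[X]) :=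
    fun θ => ∑ j ∈ Finset.range n, (X : R[X]) ^ j • (θ ∘ₗ ζ ^ (n - 1 - j)) with hDt
  have hDtv : ∀ θ : V →ₗ[R] R[X], ∀ v, Dt θ v
      = ∑ j ∈ Finset.range n, (X : R[X]) ^ j * θ ((ζ ^ (n - 1 - j)) v) := by
    intro θ v
    show (∑ j ∈ Finset.range n, (X : R[X]) ^ j • (θ ∘ₗ ζ ^ (n - 1 - j))) v = _
    rw [LinearMap.sum_apply]
    apply Finset.sum_congr rfl
    intro j _
    rw [LinearMap.smul_apply, LinearMap.comp_apply, smul_eq_mul]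
  have hzero : ∀ θ : V →ₗ[R] R[X], ∀ v, θ ((ζ ^ n) v) = 0 := by
    intro θ v; rw [hζ]; simp
  have tele : ∀ θ : V →ₗ[R] R[X], ∀ v,
      ∑ j ∈ Finset.range n,
        ((X:R[X])^(j+1) * θ ((ζ ^ (n - 1 - j)) v) - (X:R[X])^j * θ ((ζ ^ (n - j)) v))
      = X ^ n * θ v := by
    intro θ v
    have h := Finset.sum_range_sub (f := fun i => (X:R[X])^i * θ ((ζ ^ (n - i)) v)) n
    simp only [Nat.sub_self, Nat.sub_zero, pow_zero, Module.End.one_apply, one_mul,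
      hzero θ v, mul_zero, sub_zero] at h
    rw [← h]
    apply Finset.sum_congr rfl
    intro j hj
    have e : n - 1 - j = n - (j + 1) := by omega
    rw [e]
  have pow_comp : ∀ j, j < n → ∀ v : V, (ζ ^ (n - 1 - j)) (ζ v) = (ζ ^ (n - j)) v := by
    intro j hj v
    have h : ζ ^ (n - j) = ζ ^ (n - 1 - j) * ζ := by
      rw [← pow_succ]; congr 1; omega
    rw [h]; rfl
  have pow_comp' : ∀ j, j < n → ∀ v : V, ζ ((ζ ^ (n - 1 - j)) v) = (ζ ^ (n - j)) v := by
    intro j hj v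
    have h : ζ ^ (n - j) = ζ * ζ ^ (n - 1 - j) := by
      rw [← pow_succ']; congr 1; omega
    rw [h]; rfl
  have Id1 : ∀ θ : V →ₗ[R] R[X], ∀ v, X * Dt θ v - Dt θ (ζ v) = X ^ n * θ v := by
    intro θ v
    rw [hDtv θ v, hDtv θ (ζ v), Finset.mul_sum, ← tele θ v, ← Finset.sum_sub_distrib]
    apply Finset.sum_congr rfl
    intro j hj
    rw [pow_comp j (Finset.mem_range.mp hj) v]
    ring
  have Id2 : ∀ θ u : V →ₗ[R] R[X],
      (∀ v, θ v = X * u v - u (ζ v)) → ∀ v, Dt θ v = X ^ n * u v := by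
    intro θ u h v
    rw [hDtv θ v, ← tele u v]
    apply Finset.sum_congr rfl
    intro j hj
    rw [h ((ζ ^ (n - 1 - j)) v), pow_comp' j (Finset.mem_range.mp hj) v]
    ring
  have hdiv : ∀ v, ∃ q : R[X], X ^ n * q = Dt ηt v := by
    intro v
    have h0 : π (Dt ηt v) = 0 := by
      rw [hDtv, map_sum]
      have he : ∀ j ∈ Finset.range n,
          π ((X:R[X]) ^ j * ηt ((ζ ^ (n - 1 - j)) v)) = zc R n ^ j * η ((ζ ^ (n - 1 - j)) v) := by
        intro j _
        show mkA R n (X ^ j * ηt _) = _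
        rw [map_mul, map_pow, mkA_X]
        congr 1
        exact hηtv _
      rw [Finset.sum_congr rfl he, hη]
    have hmem : Dt ηt v ∈ Ideal.span ({X ^ n} : Set R[X]) := by
      rwa [← Ideal.Quotient.eq_zero_iff_mem]
    obtain ⟨q, hq⟩ := Ideal.mem_span_singleton'.mp hmem
    exact ⟨q, by rw [mul_comm]; exact hq⟩
  have hXn : (X : R[X]) ^ n ≠ 0 := pow_ne_zero _ X_ne_zero
  set mulXn : R[X] →ₗ[R] R[X] := LinearMap.mulLeft R ((X:R[X]) ^ n) with hmulXn
  have hinj : Function.Injective mulXn := fun a b h => mul_left_cancel₀ hXn h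
  set eqv := LinearEquiv.ofInjective mulXn hinj with heqv
  have hmemr : ∀ v, Dt ηt v ∈ LinearMap.range mulXn := by
    intro v; obtain ⟨q, hq⟩ := hdiv v; exact ⟨q, hq⟩
  set c : V →ₗ[R] LinearMap.range mulXn := (Dt ηt).codRestrict _ hmemr with hc
  set u : V →ₗ[R] R[X] := eqv.symm.toLinearMap ∘ₗ c with hu
  have hXu : ∀ v, X ^ n * u v = Dt ηt v := by
    intro v
    have h1 : mulXn (u v) = (c v : R[X]) := by
      have h2 := eqv.apply_symm_apply (c v)
      calc mulXn (u v) = (eqv (eqv.symm (c v)) : R[X]) := rfl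
        _ = (c v : R[X]) := by rw [h2]
    have h1' : X ^ n * u v = (c v : R[X]) := by simpa [hmulXn, LinearMap.mulLeft_apply] using h1
    exact h1'
  have hsub : ∀ θ1 θ2 : V →ₗ[R] R[X], ∀ w, Dt (θ1 - θ2) w = Dt θ1 w - Dt θ2 w := by
    intro θ1 θ2 w
    rw [hDtv, hDtv, hDtv, ← Finset.sum_sub_distrib]
    apply Finset.sum_congr rfl
    intro j _
    simp [mul_sub]
  have hmain : ∀ v, ηt v = X * u v - u (ζ v) := by
    intro v
    set d : V →ₗ[R] R[X] := ηt - ((X:R[X]) • u - u ∘ₗ ζ) with hd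
    have hdv : ∀ w, d w = ηt w - (X * u w - u (ζ w)) := by
      intro w; simp [hd, smul_eq_mul]
    have hDd : ∀ w, Dt d w = 0 := by
      intro w
      rw [hd, hsub, Id2 ((X:R[X]) • u - u ∘ₗ ζ) u (fun w => by simp [smul_eq_mul]) w, hXu]
      ring
    have hX : X ^ n * d v = 0 := by
      rw [← Id1 d v, hDd v, hDd (ζ v)]
      ring
    have hdz : d v = 0 := by
      rcases mul_eq_zero.mp hX with h | h
      · exact absurd h hXn
      · exact h
    have h3 := hdv v
    rw [hdz] at h3
    exact sub_eq_zero.mp h3.symm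
  refine ⟨π ∘ₗ u, fun v => ?_⟩
  show zc R n * π (u v) - π (u (ζ v)) = η v
  have h4 : π (X * u v) = zc R n * π (u v) := by
    have h5 := map_mul (mkA R n) X (u v)
    rw [mkA_X] at h5
    exact h5
  rw [← hηtv v, hmain v, map_sub, h4]
end solve


set_option synthInstance.maxHeartbeats 400000 in
set_option maxHeartbeats 1000000 in
/-- For `A = R[z]/(z^n)` over a DVR `R` with uniformizer `x`, given a short
exact sequence `0 → M' → M → M'' → 0` of finitely generated torsion-free `A`-modules (no
nonzero element killed by a power of `x`), the dual sequence
`0 → Hom_A(M'', A) → Hom_A(M, A) → Hom_A(M', A) → 0` is exact. -/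
theorem stmt11 (R : Type) [CommRing R] [IsDomain R] [IsDiscreteValuationRing R] (n : ℕ)
    (x : R) (hx : Irreducible x)
    (M' M M'' : Type)
    [AddCommGroup M'] [Module (Az R n) M'] [Module.Finite (Az R n) M']
    [AddCommGroup M] [Module (Az R n) M] [Module.Finite (Az R n) M]
    [AddCommGroup M''] [Module (Az R n) M''] [Module.Finite (Az R n) M'']
    (htf' : ∀ (u : M') (p : ℕ), (algebraMap R (Az R n) x) ^ p • u = 0 → u = 0)
    (htf : ∀ (u : M) (p : ℕ), (algebraMap R (Az R n) x) ^ p • u = 0 → u = 0)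
    (htf'' : ∀ (u : M'') (p : ℕ), (algebraMap R (Az R n) x) ^ p • u = 0 → u = 0)
    (f : M' →ₗ[Az R n] M) (g : M →ₗ[Az R n] M'')
    (hf : Function.Injective f) (hg : Function.Surjective g)
    (hfg : LinearMap.range f = LinearMap.ker g) :
    Function.Injective g.dualMap ∧
    LinearMap.range g.dualMap = LinearMap.ker f.dualMap ∧
    Function.Surjective f.dualMap := by
  classical
  refine ⟨?_, ?_, ?_⟩
  · -- injectivity of g.dualMap
    intro φ ψ h
    ext v
    obtain ⟨m, rfl⟩ := hg v
    exact LinearMap.congr_fun h m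
  · -- exactness in the middle
    apply le_antisymm
    · rintro _ ⟨φ, rfl⟩
      rw [LinearMap.mem_ker]
      ext w
      show φ (g (f w)) = 0
      have h1 : f w ∈ LinearMap.ker g := hfg ▸ LinearMap.mem_range_self f w
      rw [LinearMap.mem_ker] at h1
      rw [h1, map_zero]
    · intro φ hφ
      rw [LinearMap.mem_ker] at hφ
      have hker : LinearMap.ker g ≤ LinearMap.ker φ := by
        rw [← hfg]
        rintro _ ⟨w, rfl⟩
        have h2 : φ (f w) = 0 := by
          have := LinearMap.congr_fun hφ w
          simpa using this
        simpa using h2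
      set e := g.quotKerEquivOfSurjective hg with he
      refine ⟨((LinearMap.ker g).liftQ φ hker) ∘ₗ e.symm.toLinearMap, ?_⟩
      ext m
      show ((LinearMap.ker g).liftQ φ hker) (e.symm (g m)) = φ m
      have h3 : e.symm (g m) = Submodule.Quotient.mk m := by
        rw [LinearEquiv.symm_apply_eq]
        rfl
      rw [h3]
      rfl
  · -- surjectivity of f.dualMap
    intro φ
    letI : Module R M' := Module.compHom M' (algebraMap R (Az R n))
    letI : Module R M := Module.compHom M (algebraMap R (Az R n))
    letI : Module R M'' := Module.compHom M'' (algebraMap R (Az R n))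
    haveI : IsScalarTower R (Az R n) M' := ⟨fun r a m => by
      rw [show r • a = algebraMap R (Az R n) r * a from Algebra.smul_def r a, mul_smul]
      rfl⟩
    haveI : IsScalarTower R (Az R n) M := ⟨fun r a m => by
      rw [show r • a = algebraMap R (Az R n) r * a from Algebra.smul_def r a, mul_smul]
      rfl⟩
    haveI : IsScalarTower R (Az R n) M'' := ⟨fun r a m => by
      rw [show r • a = algebraMap R (Az R n) r * a from Algebra.smul_def r a, mul_smul]
      rfl⟩
    haveI : Module.Finite R (Az R n) := finiteA R n
    haveI : Module.Finite R M'' := Module.Finite.trans (Az R n) M''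
    haveI : NoZeroSMulDivisors R M'' := by
      refine ⟨fun {r u} hru => ?_⟩
      by_cases hr0 : r = 0
      · exact Or.inl hr0
      · right
        obtain ⟨k, w, hw⟩ := IsDiscreteValuationRing.eq_unit_mul_pow_irreducible hr0 hx
        have h1 : (x ^ k : R) • u = 0 := by
          have h2 : (((w⁻¹ : Rˣ) : R) * ((w : R) * x ^ k)) • u
              = ((w⁻¹ : Rˣ) : R) • (0 : M'') := by
            rw [mul_smul, ← hw, hru]
          rw [smul_zero, ← mul_assoc, Units.inv_mul, one_mul] at h2
          exact h2
        apply htf'' u k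
        have h3 : (algebraMap R (Az R n) x) ^ k • u = (x ^ k : R) • u := by
          rw [← map_pow]; rfl
        rw [h3, h1]
    haveI : Module.IsTorsionFree R M'' := .of_smul_eq_zero fun r u h => eq_zero_or_eq_zero_of_smul_eq_zero h
    haveI : Module.Free R M'' := Module.free_of_finite_type_torsion_free'
    haveI : Module.Projective R M'' := inferInstance
    -- the z-multiplication endomorphisms, R-linearly
    set zz := zc R n with hzz
    set zM : M →ₗ[R] M := ((LinearMap.lsmul (Az R n) M) zz).restrictScalars R with hzM
    set zM'' : M'' →ₗ[R] M'' := ((LinearMap.lsmul (Az R n) M'') zz).restrictScalars R with hzM''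
    have zM_apply : ∀ m : M, zM m = zz • m := fun _ => rfl
    have zM''_apply : ∀ v : M'', zM'' v = zz • v := fun _ => rfl
    have zM''_pow : ∀ (k : ℕ) (v : M''), (zM'' ^ k) v = (zz ^ k) • v := by
      intro k
      induction k with
      | zero => intro v; simp
      | succ k ih =>
          intro v
          rw [pow_succ, Module.End.mul_apply, ih (zM'' v), zM''_apply, smul_smul, ← pow_succ]
    have hζn : zM'' ^ n = 0 := by
      ext v
      rw [zM''_pow n v, hzz, zc_pow_n, LinearMap.zero_apply]; exact zero_smul (Az R n) v
    have zpow_comp : ∀ j, j < n → ∀ v : M'', zz • ((zM'' ^ (n - 1 - j)) v) = (zM'' ^ (n - j)) v := by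
      intro j hj v
      have h : zM'' ^ (n - j) = zM'' * zM'' ^ (n - 1 - j) := by
        rw [← pow_succ']; congr 1; omega
      rw [h, Module.End.mul_apply, zM''_apply]
    -- an R-linear splitting of g
    obtain ⟨σ, hσ0⟩ := Module.projective_lifting_property (g.restrictScalars R)
      (LinearMap.id : M'' →ₗ[R] M'') (fun v => hg v)
    have hσ : ∀ v : M'', g (σ v) = v := fun v => LinearMap.congr_fun hσ0 v
    -- inverse of f onto its range
    set fR := f.restrictScalars R with hfR
    have hfRinj : Function.Injective fR := hf
    set NN := LinearMap.range fR with hNN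
    set finv := (LinearEquiv.ofInjective fR hfRinj).symm with hfinv
    have hfinv_f : ∀ y : NN, f (finv y) = (y : M) := by
      intro y
      have h1 := (LinearEquiv.ofInjective fR hfRinj).apply_symm_apply y
      calc f (finv y) = ((LinearEquiv.ofInjective fR hfRinj) (finv y) : M) :=
            (LinearEquiv.ofInjective_apply fR (h := hfRinj) (finv y)).symm
        _ = (y : M) := by rw [h1]
    -- the defect of the splitting
    set eLin : M'' →ₗ[R] M := zM ∘ₗ σ - σ ∘ₗ zM'' with heLin
    have heLin_apply : ∀ v : M'', eLin v = zz • (σ v) - σ (zz • v) := fun v => rfl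
    have heMem : ∀ v : M'', eLin v ∈ NN := by
      intro v
      have hgz : g (eLin v) = 0 := by
        rw [heLin_apply, map_sub, map_smul, hσ, hσ, sub_self]
      have h1 : eLin v ∈ LinearMap.ker g := LinearMap.mem_ker.mpr hgz
      rw [← hfg] at h1
      obtain ⟨w, hw⟩ := h1
      exact ⟨w, hw⟩
    set ecod : M'' →ₗ[R] NN := eLin.codRestrict NN heMem with hecod
    set η : M'' →ₗ[R] Az R n := (φ.restrictScalars R) ∘ₗ (finv.toLinearMap ∘ₗ ecod) with hηdef
    have hη_apply : ∀ v : M'', η v = φ (finv (ecod v)) := fun v => rfl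
    have hfη : ∀ v : M'', f (finv (ecod v)) = eLin v := fun v => hfinv_f (ecod v)
    -- the constraint
    have hηc : ∀ v : M'', ∑ j ∈ Finset.range n, zz ^ j * η ((zM'' ^ (n - 1 - j)) v) = 0 := by
      intro v
      set uSum : M' := ∑ j ∈ Finset.range n, (zz ^ j) • (finv (ecod ((zM'' ^ (n - 1 - j)) v)))
        with huSum
      have h1 : ∑ j ∈ Finset.range n, zz ^ j * η ((zM'' ^ (n - 1 - j)) v) = φ uSum := by
        rw [huSum, map_sum]
        apply Finset.sum_congr rfl
        intro j _
        rw [map_smul, smul_eq_mul, hη_apply]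
      have h2 : f uSum = 0 := by
        rw [huSum, map_sum]
        have h3 : ∀ j ∈ Finset.range n,
            f ((zz ^ j) • finv (ecod ((zM'' ^ (n - 1 - j)) v)))
            = (zz ^ (j + 1)) • σ ((zM'' ^ (n - (j + 1))) v)
              - (zz ^ j) • σ ((zM'' ^ (n - j)) v) := by
          intro j hj
          have e : n - (j + 1) = n - 1 - j := by omega
          rw [map_smul, hfη, heLin_apply, smul_sub, smul_smul, ← pow_succ,
            zpow_comp j (Finset.mem_range.mp hj), e]
        rw [Finset.sum_congr rfl h3]
        have h4 := Finset.sum_range_sub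
          (f := fun i => (zz ^ i) • σ ((zM'' ^ (n - i)) v)) n
        simp only [Nat.sub_self, Nat.sub_zero, pow_zero, Module.End.one_apply, one_smul, hζn,
          LinearMap.zero_apply, map_zero, hzz, zc_pow_n, zero_smul, sub_zero, zero_sub,
          neg_zero, sub_self] at h4
        rw [← hzz] at h4
        exact h4.trans (zero_smul (Az R n) (σ v))
      have h5 : uSum = 0 := hf (by rw [h2, map_zero])
      rw [h1, h5, map_zero]
    -- solve the equation
    obtain ⟨θ, hθ⟩ := solve_eq zM'' hζn η hηc
    -- the complement map w
    set idσg : M →ₗ[R] M := LinearMap.id - σ ∘ₗ (g.restrictScalars R) with hidσg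
    have hidσg_apply : ∀ m : M, idσg m = m - σ (g m) := fun _ => rfl
    have hidMem : ∀ m : M, idσg m ∈ NN := by
      intro m
      have hg0 : g (idσg m) = 0 := by
        rw [hidσg_apply, map_sub, hσ, sub_self]
      have h1 : idσg m ∈ LinearMap.ker g := LinearMap.mem_ker.mpr hg0
      rw [← hfg] at h1
      obtain ⟨w, hw⟩ := h1
      exact ⟨w, hw⟩
    set wmap : M →ₗ[R] M' := finv.toLinearMap ∘ₗ (idσg.codRestrict NN hidMem) with hwmapdef
    have hwmap : ∀ m : M, f (wmap m) = m - σ (g m) := by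
      intro m
      calc f (wmap m) = f (finv ((idσg.codRestrict NN hidMem) m)) := rfl
        _ = ((idσg.codRestrict NN hidMem) m : M) := hfinv_f _
        _ = m - σ (g m) := rfl
    -- the candidate extension, R-linearly
    set Ψ₀ : M →ₗ[R] Az R n := θ ∘ₗ (g.restrictScalars R) + (φ.restrictScalars R) ∘ₗ wmap
      with hΨ₀def
    have hΨ₀_apply : ∀ m : M, Ψ₀ m = θ (g m) + φ (wmap m) := fun _ => rfl
    have hwz : ∀ m : M, wmap (zz • m) = zz • wmap m + finv (ecod (g m)) := by
      intro m
      apply hf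
      rw [map_add, map_smul f, hwmap, hwmap, hfη, heLin_apply, map_smul g, smul_sub]
      abel
    have hzΨ : ∀ m : M, Ψ₀ (zz • m) = zz * Ψ₀ m := by
      intro m
      rw [hΨ₀_apply, hΨ₀_apply, map_smul g, hwz, map_add, map_smul φ, smul_eq_mul]
      have h5 : θ (zz • g m) = zz * θ (g m) - η (g m) := by
        have h6 := hθ (g m)
        rw [zM''_apply] at h6
        rw [← h6]
        ring
      rw [h5, hη_apply]
      ring
    have hzkΨ : ∀ (k : ℕ) (m : M), Ψ₀ ((zz ^ k) • m) = zz ^ k * Ψ₀ m := by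
      intro k
      induction k with
      | zero => intro m; simp
      | succ k ih =>
          intro m
          rw [pow_succ, mul_comm (zz ^ k) zz, mul_smul, hzΨ, ih]
          ring
    have hsmulA : ∀ (a : Az R n) (m : M), Ψ₀ (a • m) = a * Ψ₀ m := by
      intro a m
      obtain ⟨p, rfl⟩ := mkA_surjective R n a
      induction p using Polynomial.induction_on' generalizing m with
      | add p q hp hq => rw [map_add, add_smul, map_add, hp, hq, add_mul]
      | monomial k r =>
          have h7 : mkA R n ((Polynomial.monomial k) r) = algebraMap R (Az R n) r * zz ^ k := by
            rw [← Polynomial.C_mul_X_pow_eq_monomial, map_mul, map_pow, mkA_X]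
            congr 1
          rw [h7, mul_smul]
          have h8 : (algebraMap R (Az R n) r) • ((zz ^ k) • m) = r • ((zz ^ k) • m) := rfl
          rw [h8, map_smul, hzkΨ]
          rw [show r • (zz ^ k * Ψ₀ m) = algebraMap R (Az R n) r * (zz ^ k * Ψ₀ m) from
            Algebra.smul_def (A := Az R n) r (zz ^ k * Ψ₀ m)]
          ring
    set Ψ : M →ₗ[Az R n] (Az R n) :=
      { toFun := Ψ₀,
        map_add' := fun a b => map_add Ψ₀ a b,
        map_smul' := fun a m => by simpa using hsmulA a m } with hΨdef
    refine ⟨Ψ, ?_⟩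
    ext w
    show Ψ (f w) = φ w
    have h9 : g (f w) = 0 := by
      have h10 : f w ∈ LinearMap.ker g := hfg ▸ LinearMap.mem_range_self f w
      rwa [LinearMap.mem_ker] at h10
    have h11 : wmap (f w) = w := by
      apply hf
      rw [hwmap, h9, map_zero, sub_zero]
    show Ψ₀ (f w) = φ w
    rw [hΨ₀_apply, h9, map_zero, h11, zero_add]
end
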